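/- Let n > k > 0 be coprime with k < n − k, and write n²/(nk − 1) = [a_1, …, a_t] as a regular continued fraction with a_t > 1. Then t is even, say t = 2s, and n²/(nk + 1) = [a_{2s}, …, a_1]. -/

import Mathlib

/-- Value of a finite regular continued fraction `[a_1, …, a_t]`. -/
def cfVal : List ℤ → ℚ
  | [] => 0
  | [a] => (a : ℚ)
  | a :: b :: l => (a : ℚ) + 1 / cfVal (b :: l)

namespace TsingAux

def A (x : ℤ) : Matrix (Fin 2) (Fin 2) ℤ := !![x, 1; 1, 0]

def M (a : List ℤ) : Matrix (Fin 2) (Fin 2) ℤ := (a.map A).prod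

@[simp] lemma M_nil : M [] = 1 := rfl

lemma M_cons (x : ℤ) (l : List ℤ) : M (x :: l) = A x * M l := by
  simp [M]

lemma M_append (a b : List ℤ) : M (a ++ b) = M a * M b := by
  simp [M]

lemma M_cons_00 (x : ℤ) (l : List ℤ) :
    M (x :: l) 0 0 = x * M l 0 0 + M l 1 0 := by
  simp [M_cons, A, Matrix.mul_apply, Fin.sum_univ_two]

lemma M_cons_10 (x : ℤ) (l : List ℤ) : M (x :: l) 1 0 = M l 0 0 := by
  simp [M_cons, A, Matrix.mul_apply, Fin.sum_univ_two]

lemma M_cons_01 (x : ℤ) (l : List ℤ) :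
    M (x :: l) 0 1 = x * M l 0 1 + M l 1 1 := by
  simp [M_cons, A, Matrix.mul_apply, Fin.sum_univ_two]

lemma M_cons_11 (x : ℤ) (l : List ℤ) : M (x :: l) 1 1 = M l 0 1 := by
  simp [M_cons, A, Matrix.mul_apply, Fin.sum_univ_two]

lemma M_nonneg (a : List ℤ) (h : ∀ x ∈ a, 0 < x) :
    0 ≤ M a 0 0 ∧ 0 ≤ M a 0 1 ∧ 0 ≤ M a 1 0 ∧ 0 ≤ M a 1 1 := by
  induction a with
  | nil => norm_num [Matrix.one_apply]
  | cons x l ih =>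
    have hx := h x (by simp)
    obtain ⟨h1, h2, h3, h4⟩ := ih (fun y hy => h y (by simp [hy]))
    rw [M_cons_00, M_cons_01, M_cons_10, M_cons_11]
    refine ⟨by nlinarith, by nlinarith, h1, h2⟩

lemma M00_pos (a : List ℤ) (h : ∀ x ∈ a, 0 < x) : 0 < M a 0 0 := by
  induction a with
  | nil => norm_num [Matrix.one_apply]
  | cons x l ih =>
    have hx := h x (by simp)
    have hl : ∀ y ∈ l, 0 < y := fun y hy => h y (by simp [hy])
    have h3 := (M_nonneg l hl).2.2.1
    have := ih hl
    rw [M_cons_00]; nlinarith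

lemma M10_pos (a : List ℤ) (hne : a ≠ []) (h : ∀ x ∈ a, 0 < x) : 0 < M a 1 0 := by
  cases a with
  | nil => simp at hne
  | cons x l =>
    rw [M_cons_10]
    exact M00_pos l (fun y hy => h y (by simp [hy]))

lemma M01_pos (a : List ℤ) (hne : a ≠ []) (h : ∀ x ∈ a, 0 < x) : 0 < M a 0 1 := by
  induction a with
  | nil => simp at hne
  | cons x l ih =>
    have hx := h x (by simp)
    have hl : ∀ y ∈ l, 0 < y := fun y hy => h y (by simp [hy])
    rw [M_cons_01]
    rcases eq_or_ne l [] with rfl | hl'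
    · norm_num [Matrix.one_apply]
    · have := ih hl' hl
      have := (M_nonneg l hl).2.2.2
      nlinarith

lemma M_det (a : List ℤ) : (M a).det = (-1) ^ a.length := by
  induction a with
  | nil => simp
  | cons x l ih =>
    rw [M_cons, Matrix.det_mul, ih]
    have : (A x).det = -1 := by simp [A, Matrix.det_fin_two_of]
    rw [this, List.length_cons, pow_succ]; ring

lemma A_transpose (x : ℤ) : (A x).transpose = A x := by
  ext i j; fin_cases i <;> fin_cases j <;> rfl

lemma M_reverse (a : List ℤ) : M a.reverse = (M a).transpose := by
  induction a with
  | nil => simp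
  | cons x l ih =>
    have hx1 : M [x] = A x := by simp [M]
    rw [List.reverse_cons, M_append, ih, hx1, M_cons, Matrix.transpose_mul, A_transpose]

lemma cfVal_eq (a : List ℤ) (hne : a ≠ []) (h : ∀ x ∈ a, 0 < x) :
    cfVal a = (M a 0 0 : ℚ) / (M a 1 0) := by
  induction a with
  | nil => simp at hne
  | cons x l ih =>
    cases l with
    | nil =>
      simp [cfVal, M_cons_00, M_cons_10, Matrix.one_apply]
    | cons y m =>
      have hl : ∀ z ∈ y :: m, 0 < z := fun z hz => h z (by simp [hz])
      have hp : 0 < M (y :: m) 0 0 := M00_pos _ hl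
      have hq : 0 < M (y :: m) 1 0 := M10_pos _ (by simp) hl
      have := ih (by simp) hl
      rw [cfVal, this, M_cons_00 x (y :: m), M_cons_10 x (y :: m)]
      have hp' : (0 : ℚ) < (M (y :: m) 0 0 : ℚ) := by exact_mod_cast hp
      have hq' : (0 : ℚ) < (M (y :: m) 1 0 : ℚ) := by exact_mod_cast hq
      field_simp
      push_cast
      ring

end TsingAux


/-- Let `gcd(n,k) = 1`, `0 < k < n - k`, and write `n²/(nk-1) = [a_1, …, a_t]`
with `a_t > 1`. Then `t` is even and `n²/(nk+1) = [a_t, …, a_1]`. -/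
theorem tsing_cf_even_reverse (n k : ℤ) (hk : 0 < k) (hkn : k < n - k)
    (hcop : IsCoprime n k) (a : List ℤ) (hne : a ≠ [])
    (hpos : ∀ x ∈ a, 0 < x) (hlast : 1 < a.getLast!)
    (hcf : (n ^ 2 : ℚ) / (n * k - 1) = cfVal a) :
    Even a.length ∧ (n ^ 2 : ℚ) / (n * k + 1) = cfVal a.reverse := by
  have hn : 3 ≤ n := by omega
  set p := TsingAux.M a 0 0 with hpdef
  set q := TsingAux.M a 1 0 with hqdef
  set r := TsingAux.M a 0 1 with hrdef
  set s := TsingAux.M a 1 1 with hsdef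
  have hp : 0 < p := TsingAux.M00_pos a hpos
  have hq : 0 < q := TsingAux.M10_pos a hne hpos
  have hr : 0 < r := TsingAux.M01_pos a hne hpos
  have hdet : p * s - r * q = (-1) ^ a.length := by
    have h := TsingAux.M_det a
    rw [Matrix.det_fin_two] at h
    exact h
  have hq0 : (0:ℤ) < n * k - 1 := by nlinarith
  -- identify p, q
  have hcf' : n ^ 2 * q = p * (n * k - 1) := by
    have h1 : ((n : ℚ) * k - 1) ≠ 0 := by
      have : ((n * k - 1 : ℤ) : ℚ) ≠ 0 := Int.cast_ne_zero.mpr (by omega)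
      push_cast at this; exact this
    have h2 : ((q : ℤ) : ℚ) ≠ 0 := Int.cast_ne_zero.mpr hq.ne'
    rw [TsingAux.cfVal_eq a hne hpos, div_eq_div_iff h1 h2] at hcf
    exact_mod_cast hcf
  have hsq : ((-1:ℤ) ^ a.length) * ((-1:ℤ) ^ a.length) = 1 := by
    rw [← pow_add, ← two_mul, pow_mul]; norm_num
  have hcoppq : IsCoprime p q := by
    refine ⟨(-1) ^ a.length * s, -((-1) ^ a.length * r), ?_⟩
    have : (-1:ℤ) ^ a.length * (p * s - r * q) = (-1:ℤ)^a.length * (-1:ℤ)^a.length := by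
      rw [hdet]
    rw [hsq] at this
    linarith [this]
  have hcopn : IsCoprime (n ^ 2) (n * k - 1) :=
    ⟨-(k * (n - k) - 1), n * (n - k) - 1, by ring⟩
  have hpn : p = n ^ 2 := by
    have h1 : p ∣ n ^ 2 :=
      hcoppq.dvd_of_dvd_mul_right ⟨n * k - 1, hcf'⟩
    have h2 : n ^ 2 ∣ p :=
      hcopn.dvd_of_dvd_mul_right ⟨q, hcf'.symm⟩
    exact Int.dvd_antisymm hp.le (by positivity) h1 h2
  have hqn : q = n * k - 1 := by
    have := hcf'
    rw [hpn] at this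
    exact mul_left_cancel₀ (by positivity) this
  -- decompose reverse
  obtain ⟨hd, tl, hrev⟩ : ∃ hd tl, a.reverse = hd :: tl := by
    cases hrv : a.reverse with
    | nil => exact absurd (List.reverse_eq_nil_iff.mp hrv) hne
    | cons x l => exact ⟨x, l, rfl⟩
  have ha : a = tl.reverse ++ [hd] := by
    have := congrArg List.reverse hrev
    simpa using this
  have hhd : 1 < hd := by
    have : a.getLast! = hd := by
      rw [ha]
      exact List.getLast!_of_getLast? List.getLast?_concat
    rwa [this] at hlast
  have htlpos : ∀ x ∈ tl, 0 < x := by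
    intro x hx
    apply hpos
    rw [ha]
    simp [List.mem_append]
    left
    exact hx
  -- entries of reverse
  have hrev00 : TsingAux.M a.reverse 0 0 = p := by
    rw [TsingAux.M_reverse]; rfl
  have hrev10 : TsingAux.M a.reverse 1 0 = r := by
    rw [TsingAux.M_reverse]; rfl
  have h2r : 2 * r ≤ p := by
    have e1 : p = hd * TsingAux.M tl 0 0 + TsingAux.M tl 1 0 := by
      rw [← hrev00, hrev, TsingAux.M_cons_00]
    have e2 : r = TsingAux.M tl 0 0 := by
      rw [← hrev10, hrev, TsingAux.M_cons_10]
    have h3 := (TsingAux.M_nonneg tl htlpos).2.2.1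
    have h4 := TsingAux.M00_pos tl htlpos
    nlinarith
  -- parity
  rcases Nat.even_or_odd a.length with hev | hodd
  · -- even case
    have hdet1 : p * s - r * q = 1 := by rw [hdet, hev.neg_one_pow]
    have hkey : n ^ 2 ∣ (n * k + 1) - r := by
      have : ((n * k + 1) - r) * q = n ^ 2 * (k ^ 2 - s) := by
        rw [hqn] at hdet1 ⊢
        rw [hpn] at hdet1
        linear_combination hdet1
      exact hcopn.dvd_of_dvd_mul_right ⟨k ^ 2 - s, by rw [← this, hqn]⟩
    have hreq : r = n * k + 1 := by
      have hb1 : n * k + 1 < n ^ 2 := by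
        nlinarith [mul_pos (by omega : (0:ℤ) < n) (by omega : (0:ℤ) < n - k),
          mul_pos (by omega : (0:ℤ) < n) hk]
      have hb2 : 0 < n * k + 1 := by positivity
      have hb3 : r < n ^ 2 := by omega
      have := Int.eq_zero_of_abs_lt_dvd hkey (by rw [abs_lt]; omega)
      omega
    refine ⟨hev, ?_⟩
    have hrne : a.reverse ≠ [] := by rw [hrev]; simp
    have hrpos : ∀ x ∈ a.reverse, 0 < x := by
      intro x hx; exact hpos x (List.mem_reverse.mp hx)
    rw [TsingAux.cfVal_eq a.reverse hrne hrpos, hrev00, hrev10, hpn, hreq]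
    push_cast
    ring
  · -- odd case: contradiction
    exfalso
    have hdet1 : p * s - r * q = -1 := by rw [hdet, hodd.neg_one_pow]
    have hkey : n ^ 2 ∣ (n * (n - k) - 1) - r := by
      have : ((n * (n - k) - 1) - r) * q = n ^ 2 * (k * (n - k) - 1 - s) := by
        rw [hqn] at hdet1 ⊢
        rw [hpn] at hdet1
        linear_combination hdet1
      exact hcopn.dvd_of_dvd_mul_right ⟨k * (n - k) - 1 - s, by rw [← this, hqn]⟩
    have hreq : r = n * (n - k) - 1 := by
      have hb1 : n * (n - k) - 1 < n ^ 2 := by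
        nlinarith [mul_pos (by omega : (0:ℤ) < n) hk]
      have hb2 : 0 < n * (n - k) - 1 := by
        nlinarith [mul_pos (by omega : (0:ℤ) < n) (by omega : (0:ℤ) < n - k)]
      have hb3 : r < n ^ 2 := by omega
      have := Int.eq_zero_of_abs_lt_dvd hkey (by rw [abs_lt]; omega)
      omega
    -- but 2r ≤ p = n² while 2(n(n-k)-1) > n²
    have hcon := h2r
    rw [hpn, hreq] at hcon
    nlinarith [hcon, mul_nonneg (by omega : (0:ℤ) ≤ n) (by omega : (0:ℤ) ≤ n - 2*k - 1)]
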